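/- Let J : ℝ² → ℝ be strongly monotone and constant linear. Then there exist t, t' ∈ (0,1) such that J(v₁,v₂) = t·v₁ + (1−t)·v₂ whenever v₁ ≥ v₂, and J(v₁,v₂) = t'·v₁ + (1−t')·v₂ whenever v₁ < v₂. -/
import Mathlib

theorem stmt_6 (J : ℝ → ℝ → ℝ)
    (hsmono : ∀ v₁ v₂ w₁ w₂ : ℝ, v₁ ≤ w₁ → v₂ ≤ w₂ → (v₁, v₂) ≠ (w₁, w₂) →
      J v₁ v₂ < J w₁ w₂)
    (hcl : ∀ (v₁ v₂ β c : ℝ), 0 < β → J (β * v₁ + c) (β * v₂ + c) = β * J v₁ v₂ + c) :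
    ∃ t t' : ℝ, t ∈ Set.Ioo (0:ℝ) 1 ∧ t' ∈ Set.Ioo (0:ℝ) 1 ∧
      (∀ v₁ v₂ : ℝ, v₂ ≤ v₁ → J v₁ v₂ = t * v₁ + (1 - t) * v₂) ∧
      (∀ v₁ v₂ : ℝ, v₁ < v₂ → J v₁ v₂ = t' * v₁ + (1 - t') * v₂) := by
  have h00 : J 0 0 = 0 := by
    have h2 := hcl 0 0 2 0 (by norm_num)
    simp at h2
    linarith
  have hdiag : ∀ v : ℝ, J v v = v := by
    intro v
    have := hcl 0 0 1 v (by norm_num)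
    simpa [h00] using this
  set t := J 1 0 with ht
  set s := J 0 1 with hs
  have ht0 : 0 < t := by
    have := hsmono 0 0 1 0 (by norm_num) le_rfl (by simp [Prod.ext_iff])
    simpa [h00] using this
  have ht1 : t < 1 := by
    have := hsmono 1 0 1 1 le_rfl (by norm_num) (by simp [Prod.ext_iff])
    rw [hdiag 1] at this
    linarith
  have hs0 : 0 < s := by
    have := hsmono 0 0 0 1 le_rfl (by norm_num) (by simp [Prod.ext_iff])
    simpa [h00] using this
  have hs1 : s < 1 := by
    have := hsmono 0 1 1 1 (by norm_num) le_rfl (by simp [Prod.ext_iff])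
    rw [hdiag 1] at this
    linarith
  refine ⟨t, 1 - s, ⟨ht0, ht1⟩, ⟨by linarith, by linarith⟩, ?_, ?_⟩
  · intro v₁ v₂ h
    rcases eq_or_lt_of_le h with heq | hlt
    · rw [← heq, hdiag]; ring
    · have := hcl 1 0 (v₁ - v₂) v₂ (by linarith)
      have e1 : (v₁ - v₂) * 1 + v₂ = v₁ := by ring
      have e2 : (v₁ - v₂) * 0 + v₂ = v₂ := by ring
      rw [e1, e2] at this
      rw [this]; ring
  · intro v₁ v₂ hlt
    have := hcl 0 1 (v₂ - v₁) v₁ (by linarith)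
    have e1 : (v₂ - v₁) * 0 + v₁ = v₁ := by ring
    have e2 : (v₂ - v₁) * 1 + v₁ = v₂ := by ring
    rw [e1, e2] at this
    rw [this]; ring
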